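/- Let n > 0 be a real number and let u be a C² function on [−1,1] with u'(±1) = 0, where dν_n(z) = Z_n^{-1} (1−z²)^{(n−2)/2} dz is the normalized probability measure with Z_n = √π Γ(n/2)/Γ((n+1)/2), and L f = (1−z²) f'' − n z f'. Then ∫ (L u)² dν_n = ∫ |u''|² (1−z²)² dν_n + n ∫ |u'|² (1−z²) dν_n. -/

import Mathlib

open MeasureTheory Real

set_option maxHeartbeats 1000000 in
theorem stmt_6 (n : ℝ) (hn : 0 < n) (u : ℝ → ℝ) (hu : ContDiff ℝ 2 u)
    (hbc : deriv u 1 = 0 ∧ deriv u (-1) = 0)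
    (ν : Measure ℝ)
    (hν : ν = (volume.restrict (Set.Icc (-1 : ℝ) 1)).withDensity
      (fun z => ENNReal.ofReal
        ((1 - z ^ 2) ^ ((n - 2) / 2) / (Real.sqrt π * Gamma (n / 2) / Gamma ((n + 1) / 2)))))
    (L : ℝ → ℝ)
    (hL : ∀ z, L z = (1 - z ^ 2) * deriv (deriv u) z - n * z * deriv u z) :
    ∫ z, (L z) ^ 2 ∂ν
      = ∫ z, (deriv (deriv u) z) ^ 2 * (1 - z ^ 2) ^ 2 ∂ν
        + n * ∫ z, (deriv u z) ^ 2 * (1 - z ^ 2) ∂ν := by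
  -- basic regularity facts
  have h1 : ContDiff ℝ 1 (deriv u) := by
    have := (contDiff_succ_iff_deriv (n := 1)).mp (by exact_mod_cast hu)
    exact this.2.2
  have hcv : Continuous (deriv u) := hu.continuous_deriv one_le_two
  have hcv' : Continuous (deriv (deriv u)) := h1.continuous_deriv le_rfl
  have hdv : Differentiable ℝ (deriv u) := h1.differentiable one_ne_zero
  set Z : ℝ := Real.sqrt π * Gamma (n / 2) / Gamma ((n + 1) / 2) with hZdef
  have hZ : 0 < Z := by
    apply div_pos (mul_pos (Real.sqrt_pos.mpr Real.pi_pos) (Real.Gamma_pos_of_pos (by linarith)))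
      (Real.Gamma_pos_of_pos (by linarith))
  set W : ℝ → ℝ := fun z => (1 - z ^ 2) ^ ((n - 2) / 2) / Z with hWdef
  have hWcont : ContinuousOn W (Set.Ioo (-1:ℝ) 1) := by
    apply ContinuousOn.div_const
    apply ContinuousOn.rpow_const ((continuous_const.sub (continuous_pow 2)).continuousOn)
    intro x hx
    exact Or.inl (by nlinarith [hx.1, hx.2] : (1:ℝ) - x ^ 2 ≠ 0)
  -- Step A : rewrite the three integrals as weighted integrals over Ioo
  have hconv : ∀ g : ℝ → ℝ, ∫ z, g z ∂ν = ∫ z in Set.Ioo (-1:ℝ) 1, W z * g z := by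
    intro g
    have hrestr : volume.restrict (Set.Icc (-1:ℝ) 1) = volume.restrict (Set.Ioo (-1:ℝ) 1) :=
      Measure.restrict_congr_set Ioo_ae_eq_Icc.symm
    rw [hν, hrestr]
    have hmeasAE : AEMeasurable (fun z => ((1 - z ^ 2) ^ ((n - 2) / 2) / Z).toNNReal)
        (volume.restrict (Set.Ioo (-1:ℝ) 1)) := by
      apply ContinuousOn.aemeasurable _ measurableSet_Ioo
      exact continuous_real_toNNReal.comp_continuousOn hWcont
    simp only [ENNReal.ofReal]
    rw [integral_withDensity_eq_integral_smul₀ hmeasAE g]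
    apply setIntegral_congr_fun measurableSet_Ioo
    intro z hz
    have h0 : 0 ≤ (1 - z ^ 2) ^ ((n - 2) / 2) / Z :=
      div_nonneg (Real.rpow_nonneg (by nlinarith [hz.1, hz.2]) _) hZ.le
    simp [NNReal.smul_def, Real.coe_toNNReal _ h0, hWdef]
  rw [hconv, hconv, hconv]
  -- bound on second derivative on the interval
  obtain ⟨K, hK0, hKv, hKv'⟩ : ∃ K : ℝ, 0 ≤ K ∧ (∀ z ∈ Set.Icc (-1:ℝ) 1, |deriv u z| ≤ K)
      ∧ (∀ z ∈ Set.Icc (-1:ℝ) 1, |deriv (deriv u) z| ≤ K) := by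
    obtain ⟨K1, hK1⟩ := isCompact_Icc.exists_bound_of_continuousOn
      (hcv.continuousOn (s := Set.Icc (-1:ℝ) 1))
    obtain ⟨K2, hK2⟩ := isCompact_Icc.exists_bound_of_continuousOn
      (hcv'.continuousOn (s := Set.Icc (-1:ℝ) 1))
    refine ⟨max 0 (max K1 K2), le_max_left _ _, fun z hz => ?_, fun z hz => ?_⟩
    · exact (hK1 z hz).trans ((le_max_left _ _).trans (le_max_right _ _))
    · exact (hK2 z hz).trans ((le_max_right _ _).trans (le_max_right _ _))
  -- MVT bound : (u')² ≤ K² (1-z²)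
  have hMVT : ∀ z ∈ Set.Icc (-1:ℝ) 1, (deriv u z) ^ 2 ≤ K ^ 2 * (1 - z ^ 2) := by
    intro z hz
    have hb1 : |deriv u z| ≤ K * (1 - z) := by
      have := Convex.norm_image_sub_le_of_norm_deriv_le (f := deriv u)
        (fun x _ => hdv x) (fun x hx => hKv' x hx)
        (convex_Icc (-1:ℝ) 1) (Set.right_mem_Icc.mpr (by norm_num)) hz
      rw [hbc.1] at this
      simpa [Real.norm_eq_abs, abs_of_nonpos (by linarith [hz.2] : z - 1 ≤ 0)] using this
    have hb2 : |deriv u z| ≤ K * (z + 1) := by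
      have := Convex.norm_image_sub_le_of_norm_deriv_le (f := deriv u)
        (fun x _ => hdv x) (fun x hx => hKv' x hx)
        (convex_Icc (-1:ℝ) 1) (Set.left_mem_Icc.mpr (by norm_num)) hz
      rw [hbc.2] at this
      simpa [Real.norm_eq_abs, abs_of_nonneg (by linarith [hz.1] : (0:ℝ) ≤ z + 1)] using this
    calc (deriv u z) ^ 2 = |deriv u z| * |deriv u z| := by rw [← sq_abs]; ring
    _ ≤ (K * (1 - z)) * (K * (z + 1)) := by
        apply mul_le_mul hb1 hb2 (abs_nonneg _) (mul_nonneg hK0 (by linarith [hz.2]))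
    _ = K ^ 2 * (1 - z ^ 2) := by ring
  -- the function whose derivative realizes the cross terms
  set G : ℝ → ℝ := fun z => -z * (1 - z ^ 2) ^ (n / 2) * (deriv u z) ^ 2 / Z with hGdef
  set g' : ℝ → ℝ := fun z => (n * z ^ 2 * (deriv u z) ^ 2 - (1 - z ^ 2) * (deriv u z) ^ 2
      - 2 * z * (1 - z ^ 2) * deriv u z * deriv (deriv u) z) * W z with hg'def
  have hGderiv : ∀ z ∈ Set.Ioo (-1:ℝ) 1, HasDerivAt G (g' z) z := by
    intro z hz
    have ht : (0:ℝ) < 1 - z ^ 2 := by nlinarith [hz.1, hz.2]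
    have hv : HasDerivAt (deriv u) (deriv (deriv u) z) z := (hdv z).hasDerivAt
    have hq : HasDerivAt (fun y : ℝ => 1 - y ^ 2) (-(2 * z)) z := by
      simpa using ((hasDerivAt_pow 2 z).const_sub 1)
    have hr : HasDerivAt (fun y : ℝ => (1 - y ^ 2) ^ (n / 2))
        (-(2 * z) * (n / 2) * (1 - z ^ 2) ^ (n / 2 - 1)) z := hq.rpow_const (Or.inl ht.ne')
    have h0 : HasDerivAt (fun y : ℝ => -y) (-1) z := (hasDerivAt_id z).neg
    have hprod := (((h0.mul hr).mul (hv.pow 2)).div_const Z)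
    rw [hGdef]
    refine hprod.congr_deriv ?_
    symm
    rw [hg'def, hWdef]
    simp only [Pi.mul_apply, Pi.pow_apply]
    have e1 : (1 - z ^ 2) ^ (n / 2 - 1) = (1 - z ^ 2) ^ ((n - 2) / 2) := by
      rw [show n / 2 - 1 = (n - 2) / 2 by ring]
    have e2 : (1 - z ^ 2) ^ (n / 2) = (1 - z ^ 2) ^ ((n - 2) / 2) * (1 - z ^ 2) := by
      rw [show n / 2 = (n - 2) / 2 + 1 by ring, Real.rpow_add_one ht.ne']
    rw [e1, e2]
    field_simp
    ring
  -- weight bounds on Ioo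
  have hW1 : ∀ z ∈ Set.Ioo (-1:ℝ) 1, 0 ≤ W z ∧ W z * (1 - z ^ 2) ≤ 1 / Z := by
    intro z hz
    have ht : (0:ℝ) < 1 - z ^ 2 := by nlinarith [hz.1, hz.2]
    refine ⟨div_nonneg (Real.rpow_nonneg ht.le _) hZ.le, ?_⟩
    have hWt : W z * (1 - z ^ 2) = (1 - z ^ 2) ^ (n / 2) / Z := by
      rw [hWdef]
      simp only
      rw [div_mul_eq_mul_div, ← Real.rpow_add_one ht.ne', show (n - 2) / 2 + 1 = n / 2 by ring]
    rw [hWt]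
    have h1 : (1 - z ^ 2) ^ (n / 2) ≤ 1 :=
      Real.rpow_le_one ht.le (by nlinarith [sq_nonneg z]) (by linarith)
    gcongr
  -- integrability of the pieces
  have hbdd : ∀ (f : ℝ → ℝ) (M : ℝ), ContinuousOn f (Set.Ioo (-1:ℝ) 1) →
      (∀ z ∈ Set.Ioo (-1:ℝ) 1, |f z| ≤ M) → IntegrableOn f (Set.Ioo (-1:ℝ) 1) volume := by
    intro f M hf hM
    refine ⟨hf.aestronglyMeasurable measurableSet_Ioo, ?_⟩
    apply HasFiniteIntegral.restrict_of_bounded (C := M) measure_Ioo_lt_top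
    exact (ae_restrict_iff' measurableSet_Ioo).mpr
      (Filter.Eventually.of_forall (fun z hz => by simpa using hM z hz))
  have hsq : ∀ z ∈ Set.Icc (-1:ℝ) 1, (deriv u z) ^ 2 ≤ K ^ 2 ∧ (deriv (deriv u) z) ^ 2 ≤ K ^ 2 := by
    intro z hz
    constructor
    · have := hKv z hz
      nlinarith [abs_nonneg (deriv u z), sq_abs (deriv u z)]
    · have := hKv' z hz
      nlinarith [abs_nonneg (deriv (deriv u) z), sq_abs (deriv (deriv u) z)]
  have hint2 : IntegrableOn (fun z => W z * ((deriv (deriv u) z) ^ 2 * (1 - z ^ 2) ^ 2))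
      (Set.Ioo (-1:ℝ) 1) volume := by
    apply hbdd _ (K ^ 2 / Z)
    · exact hWcont.mul ((hcv'.pow 2).mul ((continuous_const.sub (continuous_pow 2)).pow 2)).continuousOn
    · intro z hz
      have ht : (0:ℝ) < 1 - z ^ 2 := by nlinarith [hz.1, hz.2]
      have ht1 : (1:ℝ) - z ^ 2 ≤ 1 := by nlinarith [sq_nonneg z]
      obtain ⟨hw0, hwt⟩ := hW1 z hz
      have hs := (hsq z (Set.mem_Icc_of_Ioo hz)).2
      rw [abs_of_nonneg (by positivity)]
      calc W z * ((deriv (deriv u) z) ^ 2 * (1 - z ^ 2) ^ 2)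
          = (W z * (1 - z ^ 2)) * ((deriv (deriv u) z) ^ 2 * (1 - z ^ 2)) := by ring
        _ ≤ (1 / Z) * (K ^ 2 * 1) :=
            mul_le_mul hwt (by nlinarith [sq_nonneg (deriv (deriv u) z)]) (by positivity)
              (by positivity)
        _ = K ^ 2 / Z := by ring
  have hint3 : IntegrableOn (fun z => W z * ((deriv u z) ^ 2 * (1 - z ^ 2)))
      (Set.Ioo (-1:ℝ) 1) volume := by
    apply hbdd _ (K ^ 2 / Z)
    · exact hWcont.mul ((hcv.pow 2).mul (continuous_const.sub (continuous_pow 2))).continuousOn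
    · intro z hz
      have ht : (0:ℝ) < 1 - z ^ 2 := by nlinarith [hz.1, hz.2]
      obtain ⟨hw0, hwt⟩ := hW1 z hz
      have hs := (hsq z (Set.mem_Icc_of_Ioo hz)).1
      rw [abs_of_nonneg (by positivity)]
      calc W z * ((deriv u z) ^ 2 * (1 - z ^ 2))
          = (W z * (1 - z ^ 2)) * (deriv u z) ^ 2 := by ring
        _ ≤ (1 / Z) * K ^ 2 := mul_le_mul hwt hs (by positivity) (by positivity)
        _ = K ^ 2 / Z := by ring
  have hintg' : IntegrableOn g' (Set.Ioo (-1:ℝ) 1) volume := by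
    apply hbdd _ ((n + 3) * K ^ 2 / Z)
    · have c1 : Continuous fun z : ℝ => n * z ^ 2 * (deriv u z) ^ 2 :=
        (continuous_const.mul (continuous_pow 2)).mul (hcv.pow 2)
      have c2 : Continuous fun z : ℝ => (1 - z ^ 2) * (deriv u z) ^ 2 :=
        (continuous_const.sub (continuous_pow 2)).mul (hcv.pow 2)
      have c3 : Continuous fun z : ℝ => 2 * z * (1 - z ^ 2) * deriv u z * deriv (deriv u) z :=
        (((continuous_const.mul continuous_id).mul (continuous_const.sub (continuous_pow 2))).mul
          hcv).mul hcv'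
      exact (((c1.sub c2).sub c3).continuousOn).mul hWcont
    · intro z hz
      have ht : (0:ℝ) < 1 - z ^ 2 := by nlinarith [hz.1, hz.2]
      have ht1 : (1:ℝ) - z ^ 2 ≤ 1 := by nlinarith [sq_nonneg z]
      have hz2 : z ^ 2 ≤ 1 := by nlinarith [hz.1, hz.2]
      obtain ⟨hw0, hwt⟩ := hW1 z hz
      obtain ⟨hs, hs'⟩ := hsq z (Set.mem_Icc_of_Ioo hz)
      have hmvt := hMVT z (Set.mem_Icc_of_Ioo hz)
      have hvv' : |deriv u z * deriv (deriv u) z| ≤ K ^ 2 := by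
        rw [abs_mul]
        calc |deriv u z| * |deriv (deriv u) z| ≤ K * K :=
            mul_le_mul (hKv z (Set.mem_Icc_of_Ioo hz)) (hKv' z (Set.mem_Icc_of_Ioo hz))
              (abs_nonneg _) hK0
          _ = K ^ 2 := by ring
      obtain ⟨hvv'1, hvv'2⟩ := abs_le.mp hvv'
      have hc : |2 * z * (1 - z ^ 2) * deriv u z * deriv (deriv u) z|
          ≤ 2 * K ^ 2 * (1 - z ^ 2) := by
        have e : 2 * z * (1 - z ^ 2) * deriv u z * deriv (deriv u) z
            = (2 * z * (1 - z ^ 2)) * (deriv u z * deriv (deriv u) z) := by ring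
        rw [e, abs_mul]
        have h1 : |2 * z * (1 - z ^ 2)| ≤ 2 * (1 - z ^ 2) := by
          rw [abs_mul, abs_mul, abs_of_nonneg ht.le, abs_two]
          have : |z| ≤ 1 := abs_le.mpr ⟨hz.1.le, hz.2.le⟩
          nlinarith [abs_nonneg z]
        calc |2 * z * (1 - z ^ 2)| * |deriv u z * deriv (deriv u) z|
            ≤ (2 * (1 - z ^ 2)) * K ^ 2 := mul_le_mul h1 hvv' (abs_nonneg _) (by positivity)
          _ = 2 * K ^ 2 * (1 - z ^ 2) := by ring
      obtain ⟨hc1, hc2⟩ := abs_le.mp hc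
      have ha : n * z ^ 2 * (deriv u z) ^ 2 ≤ n * K ^ 2 * (1 - z ^ 2) := by
        have h1 : z ^ 2 * (deriv u z) ^ 2 ≤ (deriv u z) ^ 2 := by
          nlinarith [sq_nonneg (deriv u z)]
        have h2 : z ^ 2 * (deriv u z) ^ 2 ≤ K ^ 2 * (1 - z ^ 2) := h1.trans hmvt
        calc n * z ^ 2 * (deriv u z) ^ 2 = n * (z ^ 2 * (deriv u z) ^ 2) := by ring
          _ ≤ n * (K ^ 2 * (1 - z ^ 2)) := mul_le_mul_of_nonneg_left h2 hn.le
          _ = n * K ^ 2 * (1 - z ^ 2) := by ring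
      have ha0 : 0 ≤ n * z ^ 2 * (deriv u z) ^ 2 := by positivity
      have hb0 : 0 ≤ (1 - z ^ 2) * (deriv u z) ^ 2 := by positivity
      have hb : (1 - z ^ 2) * (deriv u z) ^ 2 ≤ K ^ 2 * (1 - z ^ 2) := by
        calc (1 - z ^ 2) * (deriv u z) ^ 2 ≤ (1 - z ^ 2) * K ^ 2 :=
            mul_le_mul_of_nonneg_left hs ht.le
          _ = K ^ 2 * (1 - z ^ 2) := by ring
      have hK2t : 0 ≤ K ^ 2 * (1 - z ^ 2) := by positivity
      have hbr : |n * z ^ 2 * (deriv u z) ^ 2 - (1 - z ^ 2) * (deriv u z) ^ 2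
          - 2 * z * (1 - z ^ 2) * deriv u z * deriv (deriv u) z| ≤ (n + 3) * K ^ 2 * (1 - z ^ 2) := by
        rw [abs_le]
        constructor
        · nlinarith [mul_nonneg hn.le hK2t]
        · nlinarith [mul_nonneg hn.le hK2t]
      rw [hg'def]
      simp only
      rw [abs_mul, abs_of_nonneg hw0]
      calc |n * z ^ 2 * (deriv u z) ^ 2 - (1 - z ^ 2) * (deriv u z) ^ 2
            - 2 * z * (1 - z ^ 2) * deriv u z * deriv (deriv u) z| * W z
          ≤ ((n + 3) * K ^ 2 * (1 - z ^ 2)) * W z := by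
            apply mul_le_mul_of_nonneg_right hbr hw0
        _ = ((n + 3) * K ^ 2) * (W z * (1 - z ^ 2)) := by ring
        _ ≤ ((n + 3) * K ^ 2) * (1 / Z) := by
            apply mul_le_mul_of_nonneg_left hwt (by positivity)
        _ = (n + 3) * K ^ 2 / Z := by ring
  -- FTC : the integral of g' vanishes
  have hFTC : ∫ z in Set.Ioo (-1:ℝ) 1, g' z = 0 := by
    have hle : (-1:ℝ) ≤ 1 := by norm_num
    have hGcont : ContinuousOn G (Set.Icc (-1:ℝ) 1) := by
      rw [hGdef]
      apply ContinuousOn.div_const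
      exact ((continuous_id.neg.continuousOn).mul
        (((continuous_const.sub (continuous_pow 2)).continuousOn).rpow_const
          (fun x _ => Or.inr (by linarith : (0:ℝ) ≤ n / 2)))).mul ((hcv.pow 2).continuousOn)
    have hii : IntervalIntegrable g' volume (-1) 1 :=
      (intervalIntegrable_iff_integrableOn_Ioo_of_le hle).mpr hintg'
    have hkey := intervalIntegral.integral_eq_sub_of_hasDeriv_right_of_le hle hGcont
      (fun x hx => (hGderiv x hx).hasDerivWithinAt) hii
    have hG1 : G 1 = 0 := by
      rw [hGdef]
      norm_num [Real.zero_rpow (by positivity : n / 2 ≠ 0)]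
    have hGm1 : G (-1) = 0 := by
      rw [hGdef]
      norm_num [Real.zero_rpow (by positivity : n / 2 ≠ 0)]
    calc ∫ z in Set.Ioo (-1:ℝ) 1, g' z = ∫ z in Set.Ioc (-1:ℝ) 1, g' z :=
        integral_Ioc_eq_integral_Ioo.symm
      _ = ∫ z in (-1:ℝ)..1, g' z := (intervalIntegral.integral_of_le hle).symm
      _ = G 1 - G (-1) := hkey
      _ = 0 := by rw [hG1, hGm1]; ring
  -- pointwise algebraic identity
  have hpt : ∀ z ∈ Set.Ioo (-1:ℝ) 1, W z * (L z) ^ 2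
      = W z * ((deriv (deriv u) z) ^ 2 * (1 - z ^ 2) ^ 2)
        + (n * (W z * ((deriv u z) ^ 2 * (1 - z ^ 2))) + n * g' z) := by
    intro z _
    rw [hL z, hg'def]
    ring
  calc ∫ z in Set.Ioo (-1:ℝ) 1, W z * (L z) ^ 2
      = ∫ z in Set.Ioo (-1:ℝ) 1, (W z * ((deriv (deriv u) z) ^ 2 * (1 - z ^ 2) ^ 2)
        + (n * (W z * ((deriv u z) ^ 2 * (1 - z ^ 2))) + n * g' z)) :=
        setIntegral_congr_fun measurableSet_Ioo (fun z hz => hpt z hz)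
    _ = (∫ z in Set.Ioo (-1:ℝ) 1, W z * ((deriv (deriv u) z) ^ 2 * (1 - z ^ 2) ^ 2))
        + ∫ z in Set.Ioo (-1:ℝ) 1, (n * (W z * ((deriv u z) ^ 2 * (1 - z ^ 2))) + n * g' z) :=
        integral_add hint2 ((hint3.const_mul n).add (hintg'.const_mul n))
    _ = (∫ z in Set.Ioo (-1:ℝ) 1, W z * ((deriv (deriv u) z) ^ 2 * (1 - z ^ 2) ^ 2))
        + ((∫ z in Set.Ioo (-1:ℝ) 1, n * (W z * ((deriv u z) ^ 2 * (1 - z ^ 2))))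
          + ∫ z in Set.Ioo (-1:ℝ) 1, n * g' z) := by
        congr 1
        exact integral_add (hint3.const_mul n) (hintg'.const_mul n)
    _ = (∫ z in Set.Ioo (-1:ℝ) 1, W z * ((deriv (deriv u) z) ^ 2 * (1 - z ^ 2) ^ 2))
        + ((n * ∫ z in Set.Ioo (-1:ℝ) 1, W z * ((deriv u z) ^ 2 * (1 - z ^ 2)))
          + n * ∫ z in Set.Ioo (-1:ℝ) 1, g' z) := by
        rw [integral_const_mul, integral_const_mul]
    _ = _ := by rw [hFTC, mul_zero, add_zero]
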